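/- Suppose (C, A) and (C~, A~) are two output-stable, observable pairs (with state spaces X and X~ and common output space Y) such that C A^alpha A^{*beta} C* = C~ A~^alpha A~^{*beta} C~* for all words alpha, beta in F_d. Then there exists a unitary U : X -> X~ with C = C~ U and U A_j = A~_j U for j = 1, ..., d. -/

import Mathlib

open ContinuousLinearMap

noncomputable section

variable {X X' Y : Type*}
  [NormedAddCommGroup X] [InnerProductSpace ℂ X] [CompleteSpace X]
  [NormedAddCommGroup X'] [InnerProductSpace ℂ X'] [CompleteSpace X']
  [NormedAddCommGroup Y] [InnerProductSpace ℂ Y] [CompleteSpace Y]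

/-- `A^v` for a word `v` (a list of letters). -/
def wordProd {E : Type*} [NormedAddCommGroup E] [NormedSpace ℂ E]
    {d : ℕ} (A : Fin d → E →L[ℂ] E) (v : List (Fin d)) : E →L[ℂ] E :=
  (v.map A).prod

local notation "⟪" x ", " y "⟫" => @inner ℂ _ _ x y

set_option linter.unusedSectionVars false in
/-- Auxiliary extension lemma: an inner-product-preserving correspondence between two
densely-ranged linear maps extends to a norm-preserving continuous linear map. -/
theorem stmt16_aux {V : Type*} [AddCommGroup V] [Module ℂ V]
    (Φ : V →ₗ[ℂ] X) (Φ' : V →ₗ[ℂ] X')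
    (hinner : ∀ f g : V, ⟪Φ f, Φ g⟫ = ⟪Φ' f, Φ' g⟫)
    (hdense : Dense (LinearMap.range Φ : Set X)) :
    ∃ U : X →L[ℂ] X', (∀ f : V, U (Φ f) = Φ' f) ∧ (∀ x : X, ‖U x‖ = ‖x‖) := by
  have hnorm : ∀ f : V, ‖Φ' f‖ = ‖Φ f‖ := by
    intro f
    rw [@norm_eq_sqrt_re_inner ℂ, @norm_eq_sqrt_re_inner ℂ, hinner]
  have hker_le : LinearMap.ker Φ ≤ LinearMap.ker Φ' := by
    intro f hf
    simp only [LinearMap.mem_ker] at hf ⊢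
    rw [← norm_eq_zero, hnorm, hf, norm_zero]
  set S := LinearMap.range Φ with hS
  let f₀ : S →ₗ[ℂ] X' :=
    ((LinearMap.ker Φ).liftQ Φ' hker_le).comp Φ.quotKerEquivRange.symm.toLinearMap
  have hf₀ : ∀ f : V, f₀ ⟨Φ f, LinearMap.mem_range_self Φ f⟩ = Φ' f := by
    intro f
    simp only [f₀, LinearMap.comp_apply, LinearEquiv.coe_coe]
    rw [show (⟨Φ f, LinearMap.mem_range_self Φ f⟩ : S)
      = Φ.quotKerEquivRange (Submodule.Quotient.mk f) from
        Subtype.ext (Φ.quotKerEquivRange_apply_mk f).symm]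
    rw [LinearEquiv.symm_apply_apply]
    simp [Submodule.liftQ_apply]
  have hisom : ∀ s : S, ‖f₀ s‖ = ‖s‖ := by
    rintro ⟨_, f, rfl⟩
    rw [hf₀ f, hnorm]
    rfl
  let T : S →ₗᵢ[ℂ] X' := ⟨f₀, hisom⟩
  have hd : DenseRange (S.subtypeL : S →L[ℂ] X) := hdense.denseRange_val
  have he : IsUniformInducing (S.subtypeL : S →L[ℂ] X) :=
    isometry_subtype_coe.isUniformInducing
  let U : X →L[ℂ] X' := T.toContinuousLinearMap.extend S.subtypeL
  have hU : ∀ f : V, U (Φ f) = Φ' f := by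
    intro f
    have := ContinuousLinearMap.extend_eq T.toContinuousLinearMap hd he
      ⟨Φ f, LinearMap.mem_range_self Φ f⟩
    rw [← hf₀ f]
    exact this
  refine ⟨U, hU, ?_⟩
  have : Set.EqOn (fun x : X => ‖U x‖) (fun x : X => ‖x‖) (S : Set X) := by
    rintro x ⟨f, rfl⟩
    simp only
    rw [hU f, hnorm]
  have := Continuous.ext_on hdense (continuous_norm.comp U.continuous) continuous_norm this
  exact fun x => congrFun this x

/-- Two output-stable, observable pairs realizing the same data
`C A^α A^{*β} C* = C' A'^α A'^{*β} C'*` (for all words α, β) are unitarily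
equivalent. -/
theorem stmt16 {d : ℕ}
    (A : Fin d → X →L[ℂ] X) (A' : Fin d → X' →L[ℂ] X')
    (C : X →L[ℂ] Y) (C' : X' →L[ℂ] Y)
    (hstable : ∀ x : X, Summable fun v : List (Fin d) => ‖C (wordProd A v x)‖ ^ 2)
    (hstable' : ∀ x : X', Summable fun v : List (Fin d) => ‖C' (wordProd A' v x)‖ ^ 2)
    (hobs : ∀ x : X, (∀ v : List (Fin d), C (wordProd A v x) = 0) → x = 0)
    (hobs' : ∀ x : X', (∀ v : List (Fin d), C' (wordProd A' v x) = 0) → x = 0)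
    (hker : ∀ α β : List (Fin d),
      C ∘L wordProd A α ∘L adjoint (wordProd A β) ∘L adjoint C
        = C' ∘L wordProd A' α ∘L adjoint (wordProd A' β) ∘L adjoint C') :
    ∃ U : X ≃ₗᵢ[ℂ] X', (∀ x : X, C x = C' (U x)) ∧
      ∀ (j : Fin d) (x : X), U (A j x) = A' j (U x) := by
  classical
  set V := (List (Fin d) →₀ Y) with hV
  set Φ : V →ₗ[ℂ] X :=
    Finsupp.lsum ℂ fun β => ((adjoint (wordProd A β)).comp (adjoint C)).toLinearMap with hΦdef
  set Φ' : V →ₗ[ℂ] X' :=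
    Finsupp.lsum ℂ fun β => ((adjoint (wordProd A' β)).comp (adjoint C')).toLinearMap with hΦ'def
  have hΦs : ∀ (β : List (Fin d)) (y : Y),
      Φ (Finsupp.single β y) = adjoint (wordProd A β) (adjoint C y) := by
    intro β y; rw [hΦdef, Finsupp.lsum_single]; rfl
  have hΦ's : ∀ (β : List (Fin d)) (y : Y),
      Φ' (Finsupp.single β y) = adjoint (wordProd A' β) (adjoint C' y) := by
    intro β y; rw [hΦ'def, Finsupp.lsum_single]; rfl
  -- the Gram identity
  have hinner : ∀ f g : V, ⟪Φ f, Φ g⟫ = ⟪Φ' f, Φ' g⟫ := by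
    intro f g
    induction f using Finsupp.induction_linear with
    | zero => simp
    | add f₁ f₂ h₁ h₂ => simp only [map_add, inner_add_left, h₁, h₂]
    | single β y =>
      induction g using Finsupp.induction_linear with
      | zero => simp
      | add g₁ g₂ h₁ h₂ => simp only [map_add, inner_add_right, h₁, h₂]
      | single α y' =>
        rw [hΦs, hΦ's, hΦs, hΦ's]
        rw [adjoint_inner_left, adjoint_inner_left, adjoint_inner_left, adjoint_inner_left]
        have h := congrFun (congrArg DFunLike.coe (hker β α)) y'
        simp only [ContinuousLinearMap.comp_apply] at h
        rw [h]
  -- density of the ranges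
  have horth : (LinearMap.range Φ)ᗮ = ⊥ := by
    rw [Submodule.eq_bot_iff]
    intro x hx
    apply hobs
    intro v
    have := (Submodule.mem_orthogonal _ x).mp hx
      (Φ (Finsupp.single v (C (wordProd A v x)))) (LinearMap.mem_range_self _ _)
    rw [hΦs, adjoint_inner_left, adjoint_inner_left] at this
    exact inner_self_eq_zero.mp this
  have horth' : (LinearMap.range Φ')ᗮ = ⊥ := by
    rw [Submodule.eq_bot_iff]
    intro x hx
    apply hobs'
    intro v
    have := (Submodule.mem_orthogonal _ x).mp hx
      (Φ' (Finsupp.single v (C' (wordProd A' v x)))) (LinearMap.mem_range_self _ _)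
    rw [hΦ's, adjoint_inner_left, adjoint_inner_left] at this
    exact inner_self_eq_zero.mp this
  have hdense : Dense (LinearMap.range Φ : Set X) :=
    Submodule.dense_iff_topologicalClosure_eq_top.mpr
      (Submodule.topologicalClosure_eq_top_iff.mpr horth)
  have hdense' : Dense (LinearMap.range Φ' : Set X') :=
    Submodule.dense_iff_topologicalClosure_eq_top.mpr
      (Submodule.topologicalClosure_eq_top_iff.mpr horth')
  -- the two extensions
  obtain ⟨U₀, hU₀, hU₀n⟩ := stmt16_aux Φ Φ' hinner hdense
  obtain ⟨V₀, hV₀, _⟩ := stmt16_aux Φ' Φ (fun f g => (hinner f g).symm) hdense'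
  have hVU : ∀ x : X, V₀ (U₀ x) = x := by
    have : Set.EqOn (fun x : X => V₀ (U₀ x)) id (LinearMap.range Φ : Set X) := by
      rintro x ⟨f, rfl⟩
      simp only [id_eq]
      rw [hU₀, hV₀]
    exact fun x => congrFun
      (Continuous.ext_on hdense (V₀.continuous.comp U₀.continuous) continuous_id this) x
  have hUV : ∀ x : X', U₀ (V₀ x) = x := by
    have : Set.EqOn (fun x : X' => U₀ (V₀ x)) id (LinearMap.range Φ' : Set X') := by
      rintro x ⟨f, rfl⟩
      simp only [id_eq]
      rw [hV₀, hU₀]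
    exact fun x => congrFun
      (Continuous.ext_on hdense' (U₀.continuous.comp V₀.continuous) continuous_id this) x
  let Ulin : X ≃ₗ[ℂ] X' := LinearEquiv.ofLinear U₀.toLinearMap V₀.toLinearMap
    (LinearMap.ext hUV) (LinearMap.ext hVU)
  let U : X ≃ₗᵢ[ℂ] X' := ⟨Ulin, hU₀n⟩
  have hUcoe : ∀ x : X, U x = U₀ x := fun _ => rfl
  have hUΦ : ∀ f : V, U (Φ f) = Φ' f := fun f => by rw [hUcoe, hU₀]
  -- property 1
  have hC : ∀ x : X, C x = C' (U x) := by
    have hCf : ∀ f : V, C (Φ f) = C' (Φ' f) := by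
      intro f
      induction f using Finsupp.induction_linear with
      | zero => simp
      | add f₁ f₂ h₁ h₂ => simp only [map_add, h₁, h₂]
      | single β y =>
        rw [hΦs, hΦ's]
        have h := hker [] β
        simp only [wordProd, List.map_nil, List.prod_nil] at h
        have := congrFun (congrArg DFunLike.coe h) y
        simpa [wordProd] using this
    have : Set.EqOn (fun x : X => C x) (fun x : X => C' (U₀ x)) (LinearMap.range Φ : Set X) := by
      rintro x ⟨f, rfl⟩
      simp only
      rw [hU₀, hCf]
    have := Continuous.ext_on hdense C.continuous (C'.continuous.comp U₀.continuous) this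
    intro x
    rw [hUcoe]
    exact congrFun this x
  -- shift lemmas
  have hshift : ∀ (j : Fin d) (f : V),
      adjoint (A j) (Φ f) = Φ (f.mapDomain (· ++ [j])) := by
    intro j f
    induction f using Finsupp.induction_linear with
    | zero => simp
    | add f₁ f₂ h₁ h₂ => simp only [Finsupp.mapDomain_add, map_add, h₁, h₂]
    | single β y =>
      rw [Finsupp.mapDomain_single, hΦs, hΦs]
      have hw : wordProd A (β ++ [j]) = (wordProd A β).comp (A j) := by
        simp [wordProd, List.map_append, List.prod_append, ContinuousLinearMap.mul_def]
      rw [hw, adjoint_comp]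
      rfl
  have hshift' : ∀ (j : Fin d) (f : V),
      adjoint (A' j) (Φ' f) = Φ' (f.mapDomain (· ++ [j])) := by
    intro j f
    induction f using Finsupp.induction_linear with
    | zero => simp
    | add f₁ f₂ h₁ h₂ => simp only [Finsupp.mapDomain_add, map_add, h₁, h₂]
    | single β y =>
      rw [Finsupp.mapDomain_single, hΦ's, hΦ's]
      have hw : wordProd A' (β ++ [j]) = (wordProd A' β).comp (A' j) := by
        simp [wordProd, List.map_append, List.prod_append, ContinuousLinearMap.mul_def]
      rw [hw, adjoint_comp]
      rfl
  refine ⟨U, hC, ?_⟩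
  -- property 2
  intro j x
  have hmem : U (A j x) - A' j (U x) ∈ (LinearMap.range Φ')ᗮ := by
    rw [Submodule.mem_orthogonal]
    rintro u ⟨f, rfl⟩
    rw [inner_sub_right, sub_eq_zero]
    calc ⟪Φ' f, U (A j x)⟫ = ⟪U (Φ f), U (A j x)⟫ := by rw [hUΦ]
      _ = ⟪Φ f, A j x⟫ := U.inner_map_map _ _
      _ = ⟪adjoint (A j) (Φ f), x⟫ := (adjoint_inner_left _ _ _).symm
      _ = ⟪Φ (f.mapDomain (· ++ [j])), x⟫ := by rw [hshift]
      _ = ⟪U (Φ (f.mapDomain (· ++ [j]))), U x⟫ := (U.inner_map_map _ _).symm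
      _ = ⟪Φ' (f.mapDomain (· ++ [j])), U x⟫ := by rw [hUΦ]
      _ = ⟪adjoint (A' j) (Φ' f), U x⟫ := by rw [hshift']
      _ = ⟪Φ' f, A' j (U x)⟫ := adjoint_inner_left _ _ _
  rw [horth', Submodule.mem_bot] at hmem
  exact sub_eq_zero.mp hmem

end
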